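/- Let q > c > 0 and n ≥ 1 be integers, and let x ≥ 0 be an integer satisfying x·c^{n−1} ≤ q^n − c^n if c divides q, and x·c^{n−1} ≤ q^{n−1}(q − c) otherwise. Define v₀ = 0, v_{i+1} = ⌊((v_i + 1)·c + x)/q⌋, and u₀ = 0, u_{i+1} = ⌊q·u_i/c⌋ + 1. Then for every 0 ≤ i ≤ n, the error E_i = ⌊x/(q − c)⌋ − v_i satisfies 0 ≤ E_i ≤ u_{n−i}. -/
import Mathlib

/-- helper: `a < (a / b + 1) * b` for `0 < b`. -/
lemma stmt12_aux_lt_div (a b : ℕ) (hb : 0 < b) : a < (a / b + 1) * b := by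
  have h1 := Nat.div_add_mod a b
  have h2 := Nat.mod_lt a hb
  calc a = b * (a / b) + a % b := h1.symm
    _ < b * (a / b) + b := by omega
    _ = (a / b + 1) * b := by ring

/-- Error bounds in Theorem 8: with `q > c > 0`, `n ≥ 1`, `x` bounded as in the theorem,
`v₀ = 0`, `v_{i+1} = ⌊((v_i + 1)c + x)/q⌋` and `u₀ = 0`, `u_{i+1} = ⌊q·u_i/c⌋ + 1`,
the error `E_i = ⌊x/(q-c)⌋ - v_i` satisfies `0 ≤ E_i ≤ u_{n-i}` for all `0 ≤ i ≤ n`. -/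
theorem stmt12 (q c n x : ℕ) (hc : 0 < c) (hcq : c < q) (hn : 1 ≤ n)
    (hx : if c ∣ q then x * c ^ (n - 1) ≤ q ^ n - c ^ n
          else x * c ^ (n - 1) ≤ q ^ (n - 1) * (q - c))
    (v : ℕ → ℕ) (hv0 : v 0 = 0)
    (hvs : ∀ i : ℕ, v (i + 1) = ((v i + 1) * c + x) / q)
    (w : ℕ → ℕ) (hw0 : w 0 = 0)
    (hws : ∀ i : ℕ, w (i + 1) = q * w i / c + 1) :
    ∀ i ≤ n, v i ≤ x / (q - c) ∧ x / (q - c) - v i ≤ w (n - i) := by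
  have hq : 0 < q := hc.trans hcq
  set T := x / (q - c) with hT
  have hxr : (q - c) * T + x % (q - c) = x := Nat.div_add_mod x (q - c)
  have hr : x % (q - c) < q - c := Nat.mod_lt _ (by omega)
  set r := x % (q - c) with hrdef
  have hxrZ : ((q : ℤ) - c) * T + r = x := by
    have := hxr; zify [hcq.le] at this; linarith
  have hrZ : (r : ℤ) < (q : ℤ) - c := by
    have := hr; zify [hcq.le] at this; linarith
  -- always: q^k ≤ w (k+1) * c^k
  have hwA : ∀ k, q ^ k ≤ w (k + 1) * c ^ k := by
    intro k
    induction k with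
    | zero => simp [hws 0, hw0]
    | succ k ih =>
      have h1 : q * w (k + 1) < w (k + 2) * c := by
        rw [hws (k + 1)]
        exact stmt12_aux_lt_div _ _ hc
      calc q ^ (k + 1) = q * q ^ k := by ring
        _ ≤ q * (w (k + 1) * c ^ k) := Nat.mul_le_mul_left _ ih
        _ = (q * w (k + 1)) * c ^ k := by ring
        _ ≤ (w (k + 2) * c) * c ^ k := Nat.mul_le_mul_right _ h1.le
        _ = w (k + 2) * c ^ (k + 1) := by ring
  -- base bound : T ≤ w n
  have hTw : T ≤ w n := by
    have hxw : x ≤ w n * (q - c) := by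
      obtain ⟨m, rfl⟩ : ∃ m, n = m + 1 := ⟨n - 1, by omega⟩
      have hcm : 0 < c ^ m := pow_pos hc m
      by_cases hdvd : c ∣ q
      · rw [if_pos hdvd] at hx
        simp only [Nat.add_sub_cancel] at hx
        obtain ⟨d, hd⟩ := hdvd
        have hwB : ∀ k, q ^ (k + 1) ≤ w (k + 1) * c ^ k * (q - c) + c ^ (k + 1) := by
          intro k
          induction k with
          | zero => simp [hws 0, hw0]; omega
          | succ k ih =>
            have hw2 : w (k + 2) = d * w (k + 1) + 1 := by
              rw [hws (k + 1)]
              have : q * w (k + 1) = c * (d * w (k + 1)) := by rw [hd]; ring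
              rw [this, Nat.mul_div_cancel_left _ hc]
            have hqd : q * w (k + 1) = c * (d * w (k + 1)) := by rw [hd]; ring
            have hqe : q - c + c = q := by omega
            calc q ^ (k + 1 + 1) = q * q ^ (k + 1) := by ring
              _ ≤ q * (w (k + 1) * c ^ k * (q - c) + c ^ (k + 1)) :=
                  Nat.mul_le_mul_left _ ih
              _ = (q * w (k + 1)) * c ^ k * (q - c) + q * c ^ (k + 1) := by ring
              _ = (c * (d * w (k + 1))) * c ^ k * (q - c) + (q - c + c) * c ^ (k + 1) := by
                  rw [← hqd, hqe]
              _ = (d * w (k + 1) + 1) * c ^ (k + 1) * (q - c) + c ^ (k + 2) := by ring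
              _ = w (k + 2) * c ^ (k + 1) * (q - c) + c ^ (k + 2) := by rw [hw2]
        have hcn : c ^ (m + 1) ≤ q ^ (m + 1) := Nat.pow_le_pow_left hcq.le _
        have h1 : x * c ^ m + c ^ (m + 1) ≤ q ^ (m + 1) := by omega
        have h2 : x * c ^ m ≤ w (m + 1) * c ^ m * (q - c) := by
          have := hwB m; omega
        have h3 : x * c ^ m ≤ (w (m + 1) * (q - c)) * c ^ m := by
          calc x * c ^ m ≤ w (m + 1) * c ^ m * (q - c) := h2
            _ = (w (m + 1) * (q - c)) * c ^ m := by ring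
        exact Nat.le_of_mul_le_mul_right h3 hcm
      · rw [if_neg hdvd] at hx
        simp only [Nat.add_sub_cancel] at hx
        have h3 : x * c ^ m ≤ (w (m + 1) * (q - c)) * c ^ m := by
          calc x * c ^ m ≤ q ^ m * (q - c) := hx
            _ ≤ (w (m + 1) * c ^ m) * (q - c) := Nat.mul_le_mul_right _ (hwA m)
            _ = (w (m + 1) * (q - c)) * c ^ m := by ring
        exact Nat.le_of_mul_le_mul_right h3 hcm
    calc T = x / (q - c) := rfl
      _ ≤ w n * (q - c) / (q - c) := Nat.div_le_div_right hxw
      _ = w n := Nat.mul_div_cancel _ (by omega)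
  -- main induction
  intro i
  induction i with
  | zero =>
    intro _
    constructor
    · rw [hv0]; exact Nat.zero_le _
    · rw [hv0]; simpa using hTw
  | succ i ih =>
    intro hi1
    obtain ⟨hvT, hTvw⟩ := ih (by omega)
    have hk : n - i = (n - (i + 1)) + 1 := by omega
    set k := n - (i + 1) with hkdef
    rw [hk] at hTvw
    set D := q * w k / c with hDdef
    have hDle : D * c ≤ q * w k := Nat.div_mul_le_self _ _
    have hTle : T ≤ v i + (D + 1) := by
      have h := hws k
      omega
    have hdiv1 : v (i + 1) * q ≤ (v i + 1) * c + x := by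
      rw [hvs i]; exact Nat.div_mul_le_self _ _
    have hdiv2 : (v i + 1) * c + x < (v (i + 1) + 1) * q := by
      rw [hvs i]; exact stmt12_aux_lt_div _ _ hq
    have hd1Z : ((v (i + 1) : ℤ)) * q ≤ ((v i : ℤ) + 1) * c + x := by exact_mod_cast hdiv1
    have hd2Z : ((v i : ℤ) + 1) * c + x < ((v (i + 1) : ℤ) + 1) * q := by exact_mod_cast hdiv2
    have hvTZ : (v i : ℤ) ≤ T := by exact_mod_cast hvT
    have hTleZ : (T : ℤ) ≤ v i + D + 1 := by exact_mod_cast hTle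
    have hDleZ : (D : ℤ) * c ≤ (q : ℤ) * w k := by exact_mod_cast hDle
    have hcZ : (0 : ℤ) < c := by exact_mod_cast hc
    have hqZ : (0 : ℤ) < q := by exact_mod_cast hq
    have hrnn : (0 : ℤ) ≤ r := by positivity
    -- part a : v (i+1) ≤ T
    have ha : v (i + 1) ≤ T := by
      have h3 : ((v i : ℤ) + 1) * c ≤ ((T : ℤ) + 1) * c :=
        mul_le_mul_of_nonneg_right (by linarith) hcZ.le
      have h2 : ((v (i + 1) : ℤ)) * q < ((T : ℤ) + 1) * q := by
        linarith [hd1Z, h3, hxrZ, hrZ]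
      have h4 : (v (i + 1) : ℤ) < (T : ℤ) + 1 := lt_of_mul_lt_mul_right h2 hqZ.le
      exact_mod_cast Int.lt_add_one_iff.mp h4
    -- part b : T ≤ v (i+1) + w k
    have hb : T ≤ v (i + 1) + w k := by
      have hprod : ((T : ℤ) - D - 1) * c ≤ (v i : ℤ) * c :=
        mul_le_mul_of_nonneg_right (by linarith) hcZ.le
      have key0 : ((T : ℤ) - w k) * q ≤ ((v i : ℤ) + 1) * c + x := by
        linarith [hprod, hDleZ, hxrZ, hrnn]
      have key : ((T : ℤ) - w k) * q < ((v (i + 1) : ℤ) + 1) * q := lt_of_le_of_lt key0 hd2Z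
      have h4 : (T : ℤ) - w k < (v (i + 1) : ℤ) + 1 := lt_of_mul_lt_mul_right key hqZ.le
      have h5 : (T : ℤ) ≤ (v (i + 1) : ℤ) + w k := by linarith
      exact_mod_cast h5
    exact ⟨ha, by omega⟩
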